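/- Let 0 < κ < α ≤ 1 and C ≥ 1. Let μ be a compactly supported Borel probability measure on ℝ² and ν a Borel probability measure on S¹ satisfying ν(B(θ, r)) ≤ C r^α for all θ and r > 0. Then ∫_{S¹} I_κ(π_θ μ) dν(θ) ≤ C' · C · I_κ(μ), where C' depends only on κ and α, π_θ(x) = ⟨x, θ⟩, and π_θ μ denotes the push-forward of μ under π_θ. -/

import Mathlib

open MeasureTheory
open scoped ENNReal RealInnerProductSpace

/-- The Riesz `t`-energy `I_t(μ) = ∬ |x − y|^{−t} dμ(x) dμ(y)`. -/
noncomputable def rieszEnergy {X : Type*} [PseudoEMetricSpace X] [MeasurableSpace X]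
    (t : ℝ) (μ : Measure X) : ℝ≥0∞ :=
  ∫⁻ x, ∫⁻ y, (edist x y) ^ (-t) ∂μ ∂μ

abbrev E2 := EuclideanSpace ℝ (Fin 2)

noncomputable def perp (w : E2) : E2 := (WithLp.equiv 2 (Fin 2 → ℝ)).symm ![-(w 1), w 0]

lemma perp_zero (w : E2) : perp w 0 = -(w 1) := rfl
lemma perp_one (w : E2) : perp w 1 = w 0 := rfl

lemma norm_sq_two (w : E2) : ‖w‖ ^ 2 = w 0 ^ 2 + w 1 ^ 2 := by
  rw [EuclideanSpace.norm_eq, Real.sq_sqrt (by positivity)]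
  simp [Fin.sum_univ_two]

lemma inner_two (w θ : E2) : ⟪w, θ⟫ = w 0 * θ 0 + w 1 * θ 1 := by
  simp [PiLp.inner_apply, Fin.sum_univ_two]; ring

lemma norm_perp (w : E2) : ‖perp w‖ = ‖w‖ := by
  have h1 := norm_sq_two w
  have h2 := norm_sq_two (perp w)
  rw [perp_zero, perp_one] at h2
  nlinarith [norm_nonneg w, norm_nonneg (perp w)]

noncomputable def uperp (w : E2) : E2 := ‖w‖⁻¹ • perp w

lemma norm_uperp (w : E2) (hw : w ≠ 0) : ‖uperp w‖ = 1 := by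
  have hR : ‖w‖ ≠ 0 := norm_ne_zero_iff.2 hw
  rw [uperp, norm_smul, norm_perp, norm_inv, norm_norm]
  field_simp

lemma lagrange (w θ : E2) : ⟪w, θ⟫ ^ 2 + ⟪perp w, θ⟫ ^ 2 = ‖w‖ ^ 2 * ‖θ‖ ^ 2 := by
  rw [inner_two, inner_two, perp_zero, perp_one, norm_sq_two, norm_sq_two]
  ring

/-- Key geometric fact: if |⟪w,θ⟫| ≤ s and θ unit then θ is close to ±uperp w. -/
lemma close_to_perp (w : E2) (hw : w ≠ 0) (s : ℝ) (θ : E2) (hθ : ‖θ‖ = 1)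
    (h : |⟪w, θ⟫| ≤ s) :
    ‖θ - uperp w‖ ≤ Real.sqrt 2 * s / ‖w‖ ∨ ‖θ + uperp w‖ ≤ Real.sqrt 2 * s / ‖w‖ := by
  have hR : (0:ℝ) < ‖w‖ := norm_pos_iff.2 hw
  set R := ‖w‖ with hRdef
  set b := ⟪perp w, θ⟫ with hbdef
  have hlag : ⟪w, θ⟫ ^ 2 + b ^ 2 = R ^ 2 := by
    have h' := lagrange w θ
    rw [hθ] at h'
    rw [← hbdef, ← hRdef] at h'
    linarith [h']
  have hs : 0 ≤ s := le_trans (abs_nonneg _) h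
  have hbR : |b| ≤ R := by nlinarith [sq_nonneg (⟪w, θ⟫), abs_nonneg b, sq_abs b]
  have hinner_u : ⟪θ, uperp w⟫ = R⁻¹ * b := by
    rw [uperp, real_inner_smul_right, real_inner_comm]
  have hnu : ‖uperp w‖ = 1 := norm_uperp w hw
  have hsub : ‖θ - uperp w‖ ^ 2 = 2 - 2 * (R⁻¹ * b) := by
    rw [norm_sub_sq_real, hθ, hnu, hinner_u]; ring
  have hadd : ‖θ + uperp w‖ ^ 2 = 2 + 2 * (R⁻¹ * b) := by
    rw [norm_add_sq_real, hθ, hnu, hinner_u]; ring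
  have hgoal : ∀ x : ℝ, x ^ 2 = 2 - 2 * (R⁻¹ * |b|) → 0 ≤ x → x ≤ Real.sqrt 2 * s / R := by
    intro x hx hx0
    have key : x ^ 2 ≤ 2 * s ^ 2 / R ^ 2 := by
      rw [hx, le_div_iff₀ (by positivity)]
      have h2 : (R - |b|) * R ≤ R ^ 2 - b ^ 2 := by nlinarith [abs_nonneg b, sq_abs b]
      have h4 : ⟪w, θ⟫ ^ 2 ≤ s ^ 2 := by nlinarith [sq_abs ⟪w, θ⟫, abs_nonneg ⟪w, θ⟫]
      have h5 : (2 - 2 * (R⁻¹ * |b|)) * R ^ 2 = 2 * ((R - |b|) * R) := by field_simp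
      nlinarith
    have hsq : (2 * s ^ 2 / R ^ 2) = (Real.sqrt 2 * s / R) ^ 2 := by
      rw [div_pow, mul_pow, Real.sq_sqrt (by norm_num : (0:ℝ) ≤ 2)]
    rw [hsq] at key
    have h6 : (0:ℝ) ≤ Real.sqrt 2 * s / R := by positivity
    nlinarith
  rcases le_or_gt 0 b with hb | hb
  · left
    refine hgoal _ ?_ (norm_nonneg _)
    rw [hsub, abs_of_nonneg hb]
  · right
    refine hgoal _ ?_ (norm_nonneg _)
    rw [hadd, abs_of_neg hb]; ring

abbrev Sph := Metric.sphere (0 : E2) 1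

lemma uperp_mem (w : E2) (hw : w ≠ 0) : uperp w ∈ Metric.sphere (0 : E2) 1 := by
  simp [mem_sphere_zero_iff_norm, norm_uperp w hw]

lemma neg_uperp_mem (w : E2) (hw : w ≠ 0) : -uperp w ∈ Metric.sphere (0 : E2) 1 := by
  simp [mem_sphere_zero_iff_norm, norm_uperp w hw]

lemma measure_slab_le (ν : Measure Sph) (C α : ℝ)
    (hfr : ∀ θ : Sph, ∀ r : ℝ, 0 < r → ν (Metric.closedBall θ r) ≤ ENNReal.ofReal (C * r ^ α))
    (w : E2) (hw : w ≠ 0) (s : ℝ) (hs : 0 < s) :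
    ν {θ : Sph | |⟪w, (θ : E2)⟫| ≤ s} ≤
      2 * ENNReal.ofReal (C * (Real.sqrt 2 * s / ‖w‖) ^ α) := by
  set r := Real.sqrt 2 * s / ‖w‖ with hr
  have hR : (0:ℝ) < ‖w‖ := norm_pos_iff.2 hw
  have hrpos : 0 < r := by positivity
  set u : Sph := ⟨uperp w, uperp_mem w hw⟩
  set v : Sph := ⟨-uperp w, neg_uperp_mem w hw⟩
  have hsub : {θ : Sph | |⟪w, (θ : E2)⟫| ≤ s} ⊆
      Metric.closedBall u r ∪ Metric.closedBall v r := by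
    intro θ hθ
    have hθ1 : ‖(θ : E2)‖ = 1 := by
      have := θ.2
      rwa [mem_sphere_zero_iff_norm] at this
    rcases close_to_perp w hw s (θ : E2) hθ1 hθ with h | h
    · left
      simp only [Metric.mem_closedBall, Subtype.dist_eq, dist_eq_norm]
      exact h
    · right
      simp only [Metric.mem_closedBall, Subtype.dist_eq, dist_eq_norm]
      rw [show (θ : E2) - (v : E2) = (θ : E2) + uperp w by simp [v, sub_neg_eq_add]]
      exact h
  calc ν {θ : Sph | |⟪w, (θ : E2)⟫| ≤ s}
      ≤ ν (Metric.closedBall u r ∪ Metric.closedBall v r) := measure_mono hsub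
    _ ≤ ν (Metric.closedBall u r) + ν (Metric.closedBall v r) := measure_union_le _ _
    _ ≤ ENNReal.ofReal (C * r ^ α) + ENNReal.ofReal (C * r ^ α) :=
        add_le_add (hfr u r hrpos) (hfr v r hrpos)
    _ = 2 * ENNReal.ofReal (C * r ^ α) := by ring

noncomputable def Cpk (κ α : ℝ) : ℝ :=
  2 * 2 ^ κ * Real.sqrt 2 ^ α * (1 - (2:ℝ) ^ (κ - α))⁻¹

lemma rho_lt_one {κ α : ℝ} (hκα : κ < α) : (2:ℝ) ^ (κ - α) < 1 :=
  Real.rpow_lt_one_of_one_lt_of_neg one_lt_two (by linarith)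

lemma Cpk_pos {κ α : ℝ} (hκα : κ < α) : 0 < Cpk κ α := by
  have h1 := rho_lt_one hκα
  have h2 : (0:ℝ) < (2:ℝ) ^ (κ - α) := Real.rpow_pos_of_pos two_pos _
  have : (0:ℝ) < (1 - (2:ℝ) ^ (κ - α))⁻¹ := by
    apply inv_pos.2; linarith
  unfold Cpk
  have h3 : (0:ℝ) < (2:ℝ) ^ κ := Real.rpow_pos_of_pos two_pos _
  have h4 : (0:ℝ) < Real.sqrt 2 ^ α := Real.rpow_pos_of_pos (by positivity) _
  positivity

lemma real_term (κ α R C : ℝ) (hR : 0 < R) (hC : 0 ≤ C) (n : ℕ) :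
    (R * (2:ℝ) ^ (-((n:ℝ) + 1))) ^ (-κ) * (2 * (C * (Real.sqrt 2 * (2:ℝ) ^ (-(n:ℝ))) ^ α))
      = 2 * 2 ^ κ * Real.sqrt 2 ^ α * C * R ^ (-κ) * ((2:ℝ) ^ (κ - α)) ^ n := by
  have h2 : (0:ℝ) < 2 := two_pos
  rw [Real.mul_rpow hR.le (by positivity), Real.mul_rpow (Real.sqrt_nonneg 2) (by positivity)]
  rw [← Real.rpow_natCast ((2:ℝ) ^ (κ - α)) n, ← Real.rpow_mul h2.le,
    ← Real.rpow_mul h2.le, ← Real.rpow_mul h2.le]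
  rw [show (-((n:ℝ) + 1)) * (-κ) = κ + (κ - α) * n + (n:ℝ) * α by ring]
  rw [Real.rpow_add h2, Real.rpow_add h2]
  rw [show (-(n:ℝ)) * α = -((n:ℝ) * α) by ring, Real.rpow_neg h2.le]
  have h5 : (0:ℝ) < (2:ℝ) ^ ((n:ℝ) * α) := Real.rpow_pos_of_pos h2 _
  field_simp

lemma key_integral (κ α C : ℝ) (hκ : 0 < κ) (hκα : κ < α) (hC : 1 ≤ C)
    (ν : Measure Sph) [IsProbabilityMeasure ν]
    (hfr : ∀ θ : Sph, ∀ r : ℝ, 0 < r → ν (Metric.closedBall θ r) ≤ ENNReal.ofReal (C * r ^ α))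
    (w : E2) :
    ∫⁻ θ : Sph, (ENNReal.ofReal |⟪w, (θ : E2)⟫|) ^ (-κ) ∂ν ≤
      ENNReal.ofReal (Cpk κ α * C) * (ENNReal.ofReal ‖w‖) ^ (-κ) := by
  classical
  have hCp : 0 < Cpk κ α := Cpk_pos hκα
  rcases eq_or_ne w 0 with rfl | hw
  · have hint : ∀ θ : Sph, (ENNReal.ofReal |⟪(0:E2), (θ : E2)⟫|) ^ (-κ) = ⊤ := by
      intro θ
      rw [inner_zero_left]
      simp only [abs_zero, ENNReal.ofReal_zero]
      exact ENNReal.zero_rpow_of_neg (by linarith)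
    rw [lintegral_congr hint, lintegral_const, measure_univ, mul_one]
    rw [norm_zero, ENNReal.ofReal_zero, ENNReal.zero_rpow_of_neg (by linarith)]
    rw [ENNReal.mul_top (by
      simp only [ne_eq, ENNReal.ofReal_eq_zero, not_le]
      nlinarith)]
  · have hR : (0:ℝ) < ‖w‖ := norm_pos_iff.2 hw
    set R := ‖w‖ with hRdef
    set g : Sph → ℝ := fun θ => |⟪w, (θ : E2)⟫| with hg
    have hg0 : ∀ θ, 0 ≤ g θ := fun θ => abs_nonneg _
    have hgle : ∀ θ : Sph, g θ ≤ R := by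
      intro θ
      have h1 : ‖(θ : E2)‖ = 1 := by
        have := θ.2; rwa [mem_sphere_zero_iff_norm] at this
      calc g θ ≤ ‖w‖ * ‖(θ : E2)‖ := abs_real_inner_le_norm _ _
        _ = R := by rw [h1, mul_one]
    set Sn : ℕ → Set Sph := fun n => {θ | g θ ≤ R * (2:ℝ) ^ (-(n:ℝ))} with hSn
    set a : ℕ → ℝ≥0∞ := fun n => ENNReal.ofReal ((R * (2:ℝ) ^ (-((n:ℝ) + 1))) ^ (-κ)) with ha
    -- pointwise bound
    have hpt : ∀ θ : Sph, (ENNReal.ofReal (g θ)) ^ (-κ) ≤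
        ∑' n, (Sn n).indicator (fun _ => a n) θ := by
      intro θ
      rcases eq_or_lt_of_le (hg0 θ) with h0 | hpos
      · have hmem : ∀ n, θ ∈ Sn n := by
          intro n
          simp only [hSn, Set.mem_setOf_eq, ← h0]
          positivity
        have heq : ∑' n, (Sn n).indicator (fun _ => a n) θ = ∑' n, a n :=
          tsum_congr fun n => Set.indicator_of_mem (hmem n) _
        rw [heq, ← h0]
        simp only [ENNReal.ofReal_zero]
        rw [ENNReal.zero_rpow_of_neg (by linarith)]
        have hbound : ∀ n, ENNReal.ofReal (R ^ (-κ)) ≤ a n := by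
          intro n
          apply ENNReal.ofReal_le_ofReal
          apply Real.rpow_le_rpow_of_nonpos (by positivity) ?_ (by linarith)
          have h1 : (2:ℝ) ^ (-((n:ℝ) + 1)) ≤ 1 :=
            Real.rpow_le_one_of_one_le_of_nonpos one_le_two (by have := Nat.cast_nonneg (α:=ℝ) n; linarith)
          nlinarith
        calc (⊤:ℝ≥0∞) = ∑' _ : ℕ, ENNReal.ofReal (R ^ (-κ)) := by
              rw [ENNReal.tsum_const_eq_top_of_ne_zero]
              simp only [ne_eq, ENNReal.ofReal_eq_zero, not_le]
              positivity
          _ ≤ ∑' n, a n := ENNReal.tsum_le_tsum hbound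
      · have hex : ∃ n : ℕ, R * (2:ℝ) ^ (-((n:ℝ) + 1)) < g θ := by
          obtain ⟨n, hn⟩ := pow_unbounded_of_one_lt (R / g θ) (one_lt_two : (1:ℝ) < 2)
          refine ⟨n, ?_⟩
          have h2 : (2:ℝ) ^ (-((n:ℝ) + 1)) = ((2:ℝ) ^ (n + 1 : ℕ))⁻¹ := by
            rw [← Real.rpow_natCast 2 (n + 1), ← Real.rpow_neg (by norm_num)]
            norm_num
          rw [h2]
          have hRlt : R < g θ * 2 ^ (n + 1) := by
            have h3 := (div_lt_iff₀ hpos).1 hn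
            have h4 : (0:ℝ) < (2:ℝ) ^ n := by positivity
            have h5 : (2:ℝ) ^ (n + 1) = 2 * 2 ^ n := by ring
            nlinarith
          rw [mul_inv_lt_iff₀ (by positivity)]
          linarith [hRlt]
        set n := Nat.find hex with hn_def
        have hn : R * (2:ℝ) ^ (-((n:ℝ) + 1)) < g θ := Nat.find_spec hex
        have hmem : θ ∈ Sn n := by
          simp only [hSn, Set.mem_setOf_eq]
          match hn' : n with
          | 0 => simpa using hgle θ
          | m + 1 =>
            have hmin := Nat.find_min hex (by omega : m < n)
            push_neg at hmin
            have : (-(((m:ℝ)) + 1)) = (-(((m+1:ℕ):ℝ))) := by push_cast; ring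
            rw [← this]
            exact_mod_cast hmin
        have hle : (ENNReal.ofReal (g θ)) ^ (-κ) ≤ a n := by
          rw [ENNReal.ofReal_rpow_of_pos hpos]
          apply ENNReal.ofReal_le_ofReal
          exact Real.rpow_le_rpow_of_nonpos (by positivity) hn.le (by linarith)
        calc (ENNReal.ofReal (g θ)) ^ (-κ) ≤ a n := hle
          _ = (Sn n).indicator (fun _ => a n) θ := by rw [Set.indicator_of_mem hmem]
          _ ≤ ∑' m, (Sn m).indicator (fun _ => a m) θ := ENNReal.le_tsum n
    have hSmeas : ∀ n, MeasurableSet (Sn n) := by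
      intro n
      have hcont : Continuous g := (continuous_const.inner continuous_subtype_val).abs
      exact measurableSet_le hcont.measurable measurable_const
    have step1 : ∫⁻ θ, (ENNReal.ofReal (g θ)) ^ (-κ) ∂ν ≤ ∑' n, a n * ν (Sn n) := by
      calc ∫⁻ θ, (ENNReal.ofReal (g θ)) ^ (-κ) ∂ν
          ≤ ∫⁻ θ, ∑' n, (Sn n).indicator (fun _ => a n) θ ∂ν := lintegral_mono hpt
        _ = ∑' n, ∫⁻ θ, (Sn n).indicator (fun _ => a n) θ ∂ν :=
            lintegral_tsum fun n => (measurable_const.indicator (hSmeas n)).aemeasurable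
        _ = ∑' n, a n * ν (Sn n) :=
            tsum_congr fun n => lintegral_indicator_const (hSmeas n) _
    have step2 : ∀ n, ν (Sn n) ≤ 2 * ENNReal.ofReal (C * (Real.sqrt 2 * (2:ℝ) ^ (-(n:ℝ))) ^ α) := by
      intro n
      have h := measure_slab_le ν C α hfr w hw (R * (2:ℝ) ^ (-(n:ℝ))) (by positivity)
      rw [show Real.sqrt 2 * (R * (2:ℝ) ^ (-(n:ℝ))) / ‖w‖ = Real.sqrt 2 * (2:ℝ) ^ (-(n:ℝ)) by
        rw [← hRdef]; field_simp] at h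
      exact h
    set ρ : ℝ := (2:ℝ) ^ (κ - α) with hρ
    have hρ0 : 0 < ρ := Real.rpow_pos_of_pos two_pos _
    have hρ1 : ρ < 1 := rho_lt_one hκα
    have hterm : ∀ n : ℕ, a n * (2 * ENNReal.ofReal (C * (Real.sqrt 2 * (2:ℝ) ^ (-(n:ℝ))) ^ α))
        = ENNReal.ofReal (2 * 2 ^ κ * Real.sqrt 2 ^ α * C * R ^ (-κ)) * (ENNReal.ofReal ρ) ^ n := by
      intro n
      have e2 : (2:ℝ≥0∞) = ENNReal.ofReal 2 := by norm_num
      rw [ha, e2, ← ENNReal.ofReal_mul (by norm_num), ← ENNReal.ofReal_mul (by positivity),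
        ← ENNReal.ofReal_pow hρ0.le, ← ENNReal.ofReal_mul (by positivity)]
      exact congrArg ENNReal.ofReal (real_term κ α R C hR (by linarith) n)
    have hgeom : ∑' n : ℕ, (ENNReal.ofReal ρ) ^ n = ENNReal.ofReal ((1 - ρ)⁻¹) := by
      rw [ENNReal.tsum_geometric, show (1:ℝ≥0∞) - ENNReal.ofReal ρ = ENNReal.ofReal (1 - ρ) by
        rw [ENNReal.ofReal_sub _ hρ0.le, ENNReal.ofReal_one],
        ← ENNReal.ofReal_inv_of_pos (by linarith)]
    calc ∫⁻ θ : Sph, (ENNReal.ofReal |⟪w, (θ : E2)⟫|) ^ (-κ) ∂ν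
        ≤ ∑' n, a n * ν (Sn n) := step1
      _ ≤ ∑' n, a n * (2 * ENNReal.ofReal (C * (Real.sqrt 2 * (2:ℝ) ^ (-(n:ℝ))) ^ α)) :=
          ENNReal.tsum_le_tsum fun n => mul_le_mul_right (step2 n) _
      _ = ∑' n, ENNReal.ofReal (2 * 2 ^ κ * Real.sqrt 2 ^ α * C * R ^ (-κ)) * (ENNReal.ofReal ρ) ^ n :=
          tsum_congr hterm
      _ = ENNReal.ofReal (2 * 2 ^ κ * Real.sqrt 2 ^ α * C * R ^ (-κ)) * ENNReal.ofReal ((1 - ρ)⁻¹) := by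
          rw [ENNReal.tsum_mul_left, hgeom]
      _ = ENNReal.ofReal (Cpk κ α * C) * (ENNReal.ofReal R) ^ (-κ) := by
          rw [ENNReal.ofReal_rpow_of_pos hR, ← ENNReal.ofReal_mul (by positivity),
            ← ENNReal.ofReal_mul (by positivity)]
          congr 1
          unfold Cpk
          ring

/-- Kaufman's projection theorem in energy form: for `0 < κ < α ≤ 1`, a compactly supported
probability measure `μ` on `ℝ²` and an `(α, C)`-Frostman probability measure `ν` on `S¹`,
`∫ I_κ(π_θ μ) dν(θ) ≤ C' ⋅ C ⋅ I_κ(μ)` with `C'` depending only on `κ` and `α`. -/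
theorem kaufman_projection (κ α C : ℝ) (hκ : 0 < κ) (hκα : κ < α) (hα : α ≤ 1)
    (hC : 1 ≤ C) :
    ∃ C' : ℝ, 0 < C' ∧
      ∀ (μ : Measure (EuclideanSpace ℝ (Fin 2)))
        (ν : Measure (Metric.sphere (0 : EuclideanSpace ℝ (Fin 2)) 1)),
        IsProbabilityMeasure μ →
        (∃ K : Set (EuclideanSpace ℝ (Fin 2)), IsCompact K ∧ μ Kᶜ = 0) →
        IsProbabilityMeasure ν →
        (∀ θ, ∀ r : ℝ, 0 < r → ν (Metric.closedBall θ r) ≤ ENNReal.ofReal (C * r ^ α)) →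
        ∫⁻ θ, rieszEnergy κ
            (Measure.map (fun x => (inner ℝ x (θ : EuclideanSpace ℝ (Fin 2)) : ℝ)) μ) ∂ν ≤
          ENNReal.ofReal (C' * C) * rieszEnergy κ μ := by
  refine ⟨Cpk κ α, Cpk_pos hκα, ?_⟩
  intro μ ν hμ _ hν hfr
  haveI := hμ
  haveI := hν
  -- the projection maps
  set π : Sph → E2 → ℝ := fun θ x => (inner ℝ x (θ : E2) : ℝ) with hπ
  have hπcont : ∀ θ : Sph, Continuous (π θ) := fun θ => continuous_id.inner continuous_const
  -- the kernel
  set e : E2 → E2 → Sph → ℝ≥0∞ :=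
    fun x y θ => (edist (π θ x) (π θ y)) ^ (-κ) with he
  have hecont : Continuous fun p : (E2 × E2) × Sph => e p.1.1 p.1.2 p.2 := by
    apply ENNReal.continuous_rpow_const.comp
    apply Continuous.edist
    · exact (continuous_fst.fst.inner (continuous_subtype_val.comp continuous_snd))
    · exact (continuous_fst.snd.inner (continuous_subtype_val.comp continuous_snd))
  -- Step A: rewrite the riesz energy of the projection
  have stepA : ∀ θ : Sph, rieszEnergy κ (Measure.map (π θ) μ) =
      ∫⁻ x, ∫⁻ y, e x y θ ∂μ ∂μ := by
    intro θ
    have hm : Measurable (π θ) := (hπcont θ).measurable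
    have hinner : ∀ x : ℝ, ∫⁻ y, (edist x y) ^ (-κ) ∂(Measure.map (π θ) μ)
        = ∫⁻ y, (edist x (π θ y)) ^ (-κ) ∂μ := by
      intro x
      exact lintegral_map
        ((ENNReal.continuous_rpow_const.comp (continuous_const.edist continuous_id)).measurable) hm
    have houter : Measurable fun x : ℝ => ∫⁻ y, (edist x (π θ y)) ^ (-κ) ∂μ := by
      apply Measurable.lintegral_prod_right'
        (f := fun p : ℝ × E2 => (edist p.1 (π θ p.2)) ^ (-κ))
      exact (ENNReal.continuous_rpow_const.comp
        (continuous_fst.edist ((hπcont θ).comp continuous_snd))).measurable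
    rw [rieszEnergy, lintegral_congr hinner, lintegral_map houter hm]
  rw [lintegral_congr stepA]
  -- convert double integrals to product-measure integrals
  have hprod : ∀ θ : Sph, ∫⁻ x, ∫⁻ y, e x y θ ∂μ ∂μ
      = ∫⁻ p : E2 × E2, e p.1 p.2 θ ∂(μ.prod μ) := by
    intro θ
    exact (lintegral_prod _ ((hecont.comp
      (continuous_id.prodMk continuous_const)).measurable.aemeasurable)).symm
  rw [lintegral_congr hprod]
  -- swap the order of integration
  have hswap : ∫⁻ θ, ∫⁻ p : E2 × E2, e p.1 p.2 θ ∂(μ.prod μ) ∂ν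
      = ∫⁻ p : E2 × E2, ∫⁻ θ, e p.1 p.2 θ ∂ν ∂(μ.prod μ) := by
    apply lintegral_lintegral_swap
    exact ((hecont.comp (continuous_snd.prodMk continuous_fst)).measurable.aemeasurable)
  rw [hswap]
  -- pointwise bound via the key integral estimate
  have hkey : ∀ p : E2 × E2, ∫⁻ θ, e p.1 p.2 θ ∂ν ≤
      ENNReal.ofReal (Cpk κ α * C) * (edist p.1 p.2) ^ (-κ) := by
    intro p
    have hrw : ∀ θ : Sph, e p.1 p.2 θ = (ENNReal.ofReal |⟪p.1 - p.2, (θ : E2)⟫|) ^ (-κ) := by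
      intro θ
      simp only [he]
      congr 2
      rw [edist_dist, Real.dist_eq, hπ]
      congr 1
      rw [inner_sub_left]
    rw [lintegral_congr hrw]
    have h := key_integral κ α C hκ hκα hC ν hfr (p.1 - p.2)
    rwa [show ENNReal.ofReal ‖p.1 - p.2‖ = edist p.1 p.2 by
      rw [edist_dist, dist_eq_norm]] at h
  calc ∫⁻ p : E2 × E2, ∫⁻ θ, e p.1 p.2 θ ∂ν ∂(μ.prod μ)
      ≤ ∫⁻ p : E2 × E2, ENNReal.ofReal (Cpk κ α * C) * (edist p.1 p.2) ^ (-κ) ∂(μ.prod μ) :=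
        lintegral_mono hkey
    _ = ENNReal.ofReal (Cpk κ α * C) * ∫⁻ p : E2 × E2, (edist p.1 p.2) ^ (-κ) ∂(μ.prod μ) :=
        lintegral_const_mul _ ((ENNReal.continuous_rpow_const.comp
          (continuous_fst.edist continuous_snd)).measurable)
    _ = ENNReal.ofReal (Cpk κ α * C) * rieszEnergy κ μ := by
        rw [rieszEnergy]
        congr 1
        exact lintegral_prod _ ((ENNReal.continuous_rpow_const.comp
          (continuous_fst.edist continuous_snd)).measurable.aemeasurable)
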